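/- Let n ≥ 2 and let X be any simple graph on n vertices. Then every connected component of the friends-and-strangers graph FS(X, K_n) has diameter at most 2n² − 5n + 3 = (n−1)((n−1)+(n−2)). -/

import Mathlib

open SimpleGraph

/-- Adjacency in the friends-and-strangers graph: bijections `σ` and `τ` are adjacent iff there
is an edge `{a, b}` of `X` such that `{σ a, σ b}` is an edge of `Y`, `σ a = τ b`, `σ b = τ a`,
and `σ c = τ c` for every vertex `c` other than `a` and `b`. -/
def fsAdj {α β : Type*} (X : SimpleGraph α) (Y : SimpleGraph β) (σ τ : α ≃ β) : Prop :=
  ∃ a b : α, X.Adj a b ∧ Y.Adj (σ a) (σ b) ∧ σ a = τ b ∧ σ b = τ a ∧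
    ∀ c : α, c ≠ a → c ≠ b → σ c = τ c

/-- The friends-and-strangers graph `FS(X, Y)` of two simple graphs on the same number of
vertices; its vertices are bijections from `V(X)` to `V(Y)`. -/
def FS {α β : Type*} (X : SimpleGraph α) (Y : SimpleGraph β) : SimpleGraph (α ≃ β) where
  Adj := fsAdj X Y
  symm := by
    constructor
    rintro σ τ ⟨a, b, hX, hY, h1, h2, h3⟩
    refine ⟨a, b, hX, ?_, h2.symm, h1.symm, fun c hca hcb => (h3 c hca hcb).symm⟩
    rw [← h2, ← h1]
    exact hY.symm
  loopless := by
    constructor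
    rintro σ ⟨a, b, hX, hY, h1, _, _⟩
    exact hX.ne (σ.injective h1)

variable {n : ℕ} {X : SimpleGraph (Fin n)}

lemma fs_adj_swap {a b : Fin n} (hab : X.Adj a b) (σ : Fin n ≃ Fin n) :
    (FS X (⊤ : SimpleGraph (Fin n))).Adj σ ((Equiv.swap a b).trans σ) := by
  refine ⟨a, b, hab, ?_, ?_, ?_, ?_⟩
  · exact SimpleGraph.top_adj _ _ |>.mpr (fun h => hab.ne (σ.injective h))
  · simp [Equiv.swap_apply_right]
  · simp [Equiv.swap_apply_left]
  · intro c hca hcb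
    simp [Equiv.swap_apply_of_ne_of_ne hca hcb]

lemma key_perm {a b c : Fin n} (hab : a ≠ b) (hcb : c ≠ b) (σ : Fin n ≃ Fin n) :
    (Equiv.swap a c).trans ((Equiv.swap c b).trans ((Equiv.swap a c).trans σ))
      = (Equiv.swap a b).trans σ := by
  have key : Equiv.swap a c * Equiv.swap c b * Equiv.swap a c = Equiv.swap a b := by
    have := Equiv.swap_mul_swap_mul_swap (x := b) (y := c) (z := a) hcb.symm hab.symm
    rwa [Equiv.swap_comm c a, Equiv.swap_comm b c] at this
  ext x
  simp only [Equiv.trans_apply]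
  rw [show Equiv.swap a c (Equiv.swap c b (Equiv.swap a c x))
      = (Equiv.swap a c * Equiv.swap c b * Equiv.swap a c) x from rfl, key]

lemma fs_walk_swap : ∀ {a b : Fin n} (p : X.Walk a b), a ≠ b → ∀ σ : Fin n ≃ Fin n,
    ∃ w : (FS X (⊤ : SimpleGraph (Fin n))).Walk σ ((Equiv.swap a b).trans σ),
      w.length ≤ 2 * p.length - 1 := by
  intro a b p
  induction p with
  | nil => intro hab; exact absurd rfl hab
  | @cons a c b h q ih =>
    intro hab σ
    by_cases hcb : c = b
    · subst hcb
      exact ⟨SimpleGraph.Walk.cons (fs_adj_swap h σ) SimpleGraph.Walk.nil, by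
        simp [SimpleGraph.Walk.length_cons]; omega⟩
    · have hq1 : 1 ≤ q.length := by
        rcases q with _ | _
        · exact absurd rfl hcb
        · simp [SimpleGraph.Walk.length_cons]
      obtain ⟨w2, hw2⟩ := ih hcb ((Equiv.swap a c).trans σ)
      have e1 : (FS X (⊤ : SimpleGraph (Fin n))).Adj σ ((Equiv.swap a c).trans σ) :=
        fs_adj_swap h σ
      have e3 := fs_adj_swap h ((Equiv.swap c b).trans ((Equiv.swap a c).trans σ))
      have heq : (Equiv.swap a c).trans ((Equiv.swap c b).trans ((Equiv.swap a c).trans σ))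
          = (Equiv.swap a b).trans σ := key_perm hab hcb σ
      rw [heq] at e3
      refine ⟨(SimpleGraph.Walk.cons e1 w2).concat e3, ?_⟩
      simp only [SimpleGraph.Walk.length_concat, SimpleGraph.Walk.length_cons]
      omega

lemma fs_adj_eq {σ τ : Fin n ≃ Fin n} (h : (FS X (⊤ : SimpleGraph (Fin n))).Adj σ τ) :
    ∃ u v : Fin n, X.Adj u v ∧ τ = (Equiv.swap u v).trans σ := by
  obtain ⟨u, v, hX, _, h1, h2, h3⟩ := h
  refine ⟨u, v, hX, Equiv.ext fun x => ?_⟩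
  by_cases hxu : x = u
  · subst hxu; simp [Equiv.trans_apply, Equiv.swap_apply_left, ← h2]
  by_cases hxv : x = v
  · subst hxv; simp [Equiv.trans_apply, Equiv.swap_apply_right, ← h1]
  · simp [Equiv.trans_apply, Equiv.swap_apply_of_ne_of_ne hxu hxv, ← h3 x hxu hxv]

lemma fs_reach_component {σ τ : Fin n ≃ Fin n}
    (h : (FS X (⊤ : SimpleGraph (Fin n))).Reachable σ τ) (a : Fin n) :
    X.Reachable a (σ.symm (τ a)) := by
  obtain ⟨w⟩ := h
  induction w with
  | nil => simpa using SimpleGraph.Reachable.refl a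
  | @cons σ σ' τ hadj w' ih =>
    obtain ⟨u, v, hX, rfl⟩ := fs_adj_eq hadj
    have hsymm : (σ.symm (τ a)) = Equiv.swap u v (((Equiv.swap u v).trans σ).symm (τ a)) := by
      simp [Equiv.symm_trans_apply]
    rw [hsymm]
    refine ih.trans ?_
    set z := ((Equiv.swap u v).trans σ).symm (τ a)
    by_cases hzu : z = u
    · rw [hzu, Equiv.swap_apply_left]; exact hX.reachable
    by_cases hzv : z = v
    · rw [hzv, Equiv.swap_apply_right]; exact hX.symm.reachable
    · rw [Equiv.swap_apply_of_ne_of_ne hzu hzv]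

lemma fs_main_aux (hn : 2 ≤ n) (τ : Fin n ≃ Fin n) :
    ∀ k : ℕ, ∀ σ : Fin n ≃ Fin n, (FS X (⊤ : SimpleGraph (Fin n))).Reachable σ τ →
    (Finset.univ.filter (fun x => σ x ≠ τ x)).card ≤ k →
    ∃ w : (FS X (⊤ : SimpleGraph (Fin n))).Walk σ τ,
      w.length ≤ (k - 1) * ((n - 1) + (n - 2)) := by
  intro k
  induction k using Nat.strong_induction_on with
  | _ k ih =>
    intro σ hreach hcard
    by_cases h0 : ∀ x, σ x = τ x
    · have hst : σ = τ := Equiv.ext h0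
      subst hst
      exact ⟨SimpleGraph.Walk.nil, Nat.zero_le _⟩
    push_neg at h0
    obtain ⟨a, ha⟩ := h0
    set b := σ.symm (τ a) with hbdef
    have hb : σ b = τ a := Equiv.apply_symm_apply σ (τ a)
    have hba : b ≠ a := fun hh => ha (hh ▸ hb)
    have hreachab : X.Reachable a b := fs_reach_component hreach a
    obtain ⟨w0⟩ := hreachab
    have hp : (w0.toPath : X.Walk a b).IsPath := w0.toPath.2
    have hplen : (w0.toPath : X.Walk a b).length ≤ n - 1 := by
      have := hp.length_lt
      simp only [Fintype.card_fin] at this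
      omega
    obtain ⟨w1, hw1⟩ := fs_walk_swap (w0.toPath : X.Walk a b) hba.symm σ
    have hw1' : w1.length ≤ (n - 1) + (n - 2) := by omega
    -- new disagreement set strictly smaller
    have hsub : (Finset.univ.filter (fun x => ((Equiv.swap a b).trans σ) x ≠ τ x))
        ⊆ (Finset.univ.filter (fun x => σ x ≠ τ x)).erase a := by
      intro x hx
      rw [Finset.mem_filter] at hx; simp only [Finset.mem_univ, true_and, Equiv.trans_apply] at hx
      have hxa : x ≠ a := by
        intro hh; subst hh
        rw [Equiv.swap_apply_left, hb] at hx; exact hx rfl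
      refine Finset.mem_erase.mpr ⟨hxa, Finset.mem_filter.mpr ⟨Finset.mem_univ _, ?_⟩⟩
      by_cases hxb : x = b
      · subst hxb
        rw [hb]
        intro hh
        exact hba (τ.injective hh).symm
      · rwa [Equiv.swap_apply_of_ne_of_ne hxa hxb] at hx
    have hamem : a ∈ Finset.univ.filter (fun x => σ x ≠ τ x) :=
      Finset.mem_filter.mpr ⟨Finset.mem_univ _, ha⟩
    have hbmem : b ∈ Finset.univ.filter (fun x => σ x ≠ τ x) :=
      Finset.mem_filter.mpr ⟨Finset.mem_univ _, by rw [hb]; exact fun hh => hba (τ.injective hh).symm⟩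
    have hk2 : 2 ≤ k := by
      have h2 : 2 ≤ (Finset.univ.filter (fun x => σ x ≠ τ x)).card := by
        have := Finset.one_lt_card.mpr ⟨a, hamem, b, hbmem, hba.symm⟩
        omega
      omega
    have hcard' : (Finset.univ.filter (fun x => ((Equiv.swap a b).trans σ) x ≠ τ x)).card ≤ k - 1 := by
      have := Finset.card_le_card hsub
      have := Finset.card_erase_le (a := a) (s := Finset.univ.filter (fun x => σ x ≠ τ x))
      have h3 := Finset.card_erase_of_mem hamem
      omega
    have hreach' : (FS X (⊤ : SimpleGraph (Fin n))).Reachable ((Equiv.swap a b).trans σ) τ :=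
      (SimpleGraph.Walk.reachable w1).symm.trans hreach
    obtain ⟨w2, hw2⟩ := ih (k - 1) (by omega) _ hreach' hcard'
    refine ⟨w1.append w2, ?_⟩
    rw [SimpleGraph.Walk.length_append]
    have hexp : (k - 1) * ((n - 1) + (n - 2)) =
        ((n - 1) + (n - 2)) + (k - 1 - 1) * ((n - 1) + (n - 2)) := by
      have h12 : k - 1 - 1 = k - 2 := by omega
      have h13 : k - 1 = (k - 2) + 1 := by omega
      rw [h12, h13, Nat.succ_mul]
      omega
    omega


/-- For `n ≥ 2` and any `n`-vertex simple graph `X`, every connected component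
of `FS(X, K_n)` has diameter at most `2n² - 5n + 3 = (n - 1) * ((n - 1) + (n - 2))`. -/
theorem fs_complete_component_diam (n : ℕ) (hn : 2 ≤ n) (X : SimpleGraph (Fin n))
    (σ τ : Fin n ≃ Fin n)
    (h : (FS X (⊤ : SimpleGraph (Fin n))).Reachable σ τ) :
    (FS X (⊤ : SimpleGraph (Fin n))).dist σ τ ≤ (n - 1) * ((n - 1) + (n - 2)) := by
  have hcard : (Finset.univ.filter (fun x => σ x ≠ τ x)).card ≤ n := by
    have := Finset.card_filter_le Finset.univ (fun x => σ x ≠ τ x)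
    simpa using this
  obtain ⟨w, hw⟩ := fs_main_aux hn τ n σ h hcard
  calc (FS X (⊤ : SimpleGraph (Fin n))).dist σ τ ≤ w.length := SimpleGraph.dist_le w
    _ ≤ (n - 1) * ((n - 1) + (n - 2)) := hw
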